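/- arXiv:2402.05677 — 2 statements merged into one kernel-verified Lean document; each statement's English description precedes it below -/
import Mathlib

section
/- Let m ≥ 3, let a be a primitive element of 𝔽_{2^m} (a generator of 𝔽_{2^m}^*), and let d = 2^m − 2. Define f : 𝔽_{2^m} × 𝔽_{2^m} → ℤ/8ℤ by f(x,y) = ι(Tr(x y^d)) + 2·ι(Tr(x(1+a)y^d)) + 4·ι(Tr(x(1+a^d)y^d)). Then f is gbent, i.e., |Σ_{x,y ∈ 𝔽_{2^m}} ζ₈^{f(x,y)} (−1)^{ι(Tr(ux)) + ι(Tr(vy))}| = 2^m for all u, v ∈ 𝔽_{2^m}. -/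
noncomputable section

/-- The absolute trace Tr(x) = x + x² + x⁴ + … + x^{2^{m−1}}. -/
def Tr {F : Type} [Field F] (m : ℕ) (x : F) : F :=
  ∑ i ∈ Finset.range m, x ^ (2 ^ i)

/-- ι(e): the integer lift of e ∈ {0,1} ⊆ F. -/
def iotaN {F : Type} [Field F] [DecidableEq F] (e : F) : ℕ :=
  if e = 1 then 1 else 0

/-- ι(e) viewed in ℤ/8ℤ. -/
def iota8 {F : Type} [Field F] [DecidableEq F] (e : F) : ZMod 8 :=
  if e = 1 then 1 else 0

/-- ζ₈ = e^{2πi/8}. -/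
def zeta8 : ℂ := Complex.exp (2 * Real.pi * Complex.I / 8)

namespace Aux14

open Finset

lemma zeta8_pow_four : zeta8 ^ 4 = -1 := by
  unfold zeta8
  rw [← Complex.exp_nat_mul]
  rw [show ((4:ℕ):ℂ) * (2 * Real.pi * Complex.I / 8) = Real.pi * Complex.I by push_cast; ring]
  exact Complex.exp_pi_mul_I

lemma abs_zeta8 : ‖zeta8‖ = 1 := by
  have : zeta8 = Complex.exp ((Real.pi / 4 : ℝ) * Complex.I) := by
    unfold zeta8; congr 1; push_cast; ring
  rw [this, Complex.norm_exp_ofReal_mul_I]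

variable {F : Type} [Field F] [Fintype F] [DecidableEq F]

def chi (m : ℕ) (z : F) : ℂ := (-1 : ℂ) ^ (iotaN (Tr m z))

lemma chi_def (m : ℕ) (z : F) : chi m z = (-1 : ℂ) ^ (iotaN (Tr m z)) := rfl

lemma pow2_add (h2 : (2:F) = 0) (x y : F) (i : ℕ) :
    (x + y) ^ (2^i) = x ^ (2^i) + y ^ (2^i) := by
  induction i with
  | zero => simp
  | succ n ih =>
      rw [pow_succ, pow_mul, pow_mul, pow_mul, ih]
      linear_combination (x ^ 2^n * y ^ 2^n) * h2

lemma tr_add (h2 : (2:F) = 0) (m : ℕ) (x y : F) :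
    Tr m (x + y) = Tr m x + Tr m y := by
  unfold Tr
  rw [← Finset.sum_add_distrib]
  exact Finset.sum_congr rfl fun i _ => pow2_add h2 x y i

lemma tr_zero (m : ℕ) : Tr m (0 : F) = 0 := by
  unfold Tr
  apply Finset.sum_eq_zero
  intro i _
  exact zero_pow (by positivity)

lemma sq_sum (h2 : (2:F) = 0) {ι : Type*} (s : Finset ι) (g : ι → F) :
    (∑ i ∈ s, g i) ^ 2 = ∑ i ∈ s, (g i) ^ 2 := by
  induction s using Finset.cons_induction with
  | empty => simp
  | cons x s hx ih =>
      rw [Finset.sum_cons, Finset.sum_cons, ← ih]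
      linear_combination (g x * (∑ i ∈ s, g i)) * h2

lemma tr_sq (h2 : (2:F) = 0) (m : ℕ) (hF : Fintype.card F = 2 ^ m) (x : F) :
    (Tr m x) ^ 2 = Tr m x := by
  have hx : x ^ (2^m) = x := by rw [← hF]; exact FiniteField.pow_card x
  unfold Tr
  rw [sq_sum h2]
  have h1 : ∀ i ∈ Finset.range m, (x ^ 2^i) ^ 2 = x ^ 2^(i+1) := by
    intro i _; rw [← pow_mul, pow_succ]
  rw [Finset.sum_congr rfl h1]
  have h3 : (∑ i ∈ Finset.range m, x ^ 2^(i+1)) + x ^ 2^0 = ∑ i ∈ Finset.range (m+1), x ^ 2^i :=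
    (Finset.sum_range_succ' (fun i => x ^ 2^i) m).symm
  have h4 : ∑ i ∈ Finset.range (m+1), x ^ 2^i = (∑ i ∈ Finset.range m, x ^ 2^i) + x ^ 2^m :=
    Finset.sum_range_succ _ m
  rw [hx] at h4
  simp only [pow_zero, pow_one] at h3
  linear_combination h3 + h4

lemma tr_01 (h2 : (2:F) = 0) (m : ℕ) (hF : Fintype.card F = 2 ^ m) (x : F) :
    Tr m x = 0 ∨ Tr m x = 1 := by
  have h := tr_sq h2 m hF x
  have : Tr m x * (Tr m x - 1) = 0 := by linear_combination h
  rcases mul_eq_zero.mp this with h | h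
  · exact Or.inl h
  · exact Or.inr (by linear_combination h)

lemma chi_zero (m : ℕ) : chi m (0 : F) = 1 := by
  unfold chi
  rw [tr_zero]
  simp [iotaN]

lemma chi_add (h2 : (2:F) = 0) (m : ℕ) (hF : Fintype.card F = 2 ^ m) (z w : F) :
    chi m (z + w) = chi m z * chi m w := by
  unfold chi
  rw [tr_add h2]
  rcases tr_01 h2 m hF z with hz | hz <;> rcases tr_01 h2 m hF w with hw | hw <;>
    rw [hz, hw]
  · norm_num [iotaN]
  · norm_num [iotaN]
  · norm_num [iotaN]
  · rw [show (1:F)+1 = 0 by linear_combination h2]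
    norm_num [iotaN]

lemma chi_vals (m : ℕ) (z : F) : chi m z = 1 ∨ chi m z = -1 := by
  unfold chi iotaN
  split <;> norm_num

lemma abs_chi (m : ℕ) (z : F) : ‖chi m z‖ = 1 := by
  rcases chi_vals m z with h | h <;> rw [h] <;> simp

lemma exists_tr_one (h2 : (2:F) = 0) (m : ℕ) (hm : 1 ≤ m) (hF : Fintype.card F = 2 ^ m) :
    ∃ z : F, Tr m z = 1 := by
  by_contra hcon
  push_neg at hcon
  have hall : ∀ z : F, Tr m z = 0 := by
    intro z
    rcases tr_01 h2 m hF z with h | h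
    · exact h
    · exact absurd h (hcon z)
  set P : Polynomial F := ∑ i ∈ Finset.range m, Polynomial.X ^ (2^i) with hP
  have heval : ∀ z : F, P.eval z = 0 := by
    intro z
    have : P.eval z = Tr m z := by
      rw [hP, Polynomial.eval_finset_sum]
      unfold Tr
      exact Finset.sum_congr rfl fun i _ => by simp
    rw [this, hall]
  have hdeg : P.natDegree ≤ 2^(m-1) := by
    apply Polynomial.natDegree_sum_le_of_forall_le
    intro i hi
    rw [Polynomial.natDegree_X_pow]
    have := Finset.mem_range.mp hi
    exact Nat.pow_le_pow_right (by norm_num) (by omega)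
  have hzero : P = 0 := by
    apply Polynomial.eq_zero_of_natDegree_lt_card_of_eval_eq_zero P
      (f := (id : F → F)) Function.injective_id heval
    rw [hF]
    calc P.natDegree ≤ 2^(m-1) := hdeg
      _ < 2^m := Nat.pow_lt_pow_right (by norm_num) (by omega)
  have hcoeff : P.coeff (2^(m-1)) = 1 := by
    rw [hP, Polynomial.finset_sum_coeff]
    rw [Finset.sum_eq_single_of_mem (m-1) (Finset.mem_range.mpr (by omega))]
    · simp [Polynomial.coeff_X_pow]
    · intro i hi hne
      rw [Polynomial.coeff_X_pow]
      rw [if_neg]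
      intro h
      exact hne (Nat.pow_right_injective (le_refl 2) h.symm)
  rw [hzero] at hcoeff
  simp at hcoeff

lemma sum_chi (h2 : (2:F) = 0) (m : ℕ) (hm : 1 ≤ m) (hF : Fintype.card F = 2 ^ m) (w : F) :
    ∑ x : F, chi m (w * x) = if w = 0 then ((2:ℂ))^m else 0 := by
  split_ifs with h
  · subst h
    simp only [zero_mul, chi_zero]
    rw [Finset.sum_const, Finset.card_univ, hF]
    push_cast; ring
  · obtain ⟨z₀, hz₀⟩ := exists_tr_one h2 m hm hF
    set x₀ := w⁻¹ * z₀ with hx₀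
    have hwx₀ : w * x₀ = z₀ := by rw [hx₀, ← mul_assoc, mul_inv_cancel₀ h, one_mul]
    have hchix₀ : chi m (w * x₀) = -1 := by
      show (-1:ℂ)^(iotaN (Tr m (w * x₀))) = -1
      rw [hwx₀, hz₀]; norm_num [iotaN]
    have key : ∑ x : F, chi m (w * (x + x₀)) = ∑ x : F, chi m (w * x) :=
      Equiv.sum_comp (Equiv.addRight x₀) (fun y => chi m (w * y))
    have key2 : ∀ x : F, chi m (w * (x + x₀)) = chi m (w * x) * (-1) := by
      intro x
      rw [mul_add, chi_add h2 m hF, hchix₀]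
    rw [Finset.sum_congr rfl (fun x _ => key2 x), ← Finset.sum_mul] at key
    have : (2:ℂ) * ∑ x : F, chi m (w * x) = 0 := by linear_combination -key
    have h2c : (2:ℂ) ≠ 0 := two_ne_zero
    exact (mul_eq_zero.mp this).resolve_left h2c

end Aux14

open Aux14

/-- Let m ≥ 3, a a primitive element of 𝔽_{2^m}, d = 2^m − 2.
Then f(x,y) = ι(Tr(x y^d)) + 2·ι(Tr(x(1+a)y^d)) + 4·ι(Tr(x(1+a^d)y^d))
is gbent: |Σ_{x,y} ζ₈^{f(x,y)} (−1)^{ι(Tr(ux))+ι(Tr(vy))}| = 2^m for all u,v. -/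
theorem stmt14 {F : Type} [Field F] [Fintype F] [DecidableEq F] (m : ℕ)
    (hm : 3 ≤ m) (hF : Fintype.card F = 2 ^ m)
    (a : F) (ha : ∀ x : F, x ≠ 0 → ∃ j : ℕ, a ^ j = x)
    (f : F → F → ZMod 8)
    (hf : ∀ x y, f x y =
      iota8 (Tr m (x * y ^ (2 ^ m - 2))) +
      2 * iota8 (Tr m (x * (1 + a) * y ^ (2 ^ m - 2))) +
      4 * iota8 (Tr m (x * (1 + a ^ (2 ^ m - 2)) * y ^ (2 ^ m - 2)))) :
    ∀ u v : F,
      ‖(∑ x : F, ∑ y : F,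
        zeta8 ^ (f x y).val *
          (-1 : ℂ) ^ (iotaN (Tr m (u * x)) + iotaN (Tr m (v * y))))‖ =
        2 ^ m := by
  intro u v
  have hm1 : (1:ℕ) ≤ m := by omega
  have h2m : 8 ≤ 2^m := by
    calc (8:ℕ) = 2^3 := by norm_num
      _ ≤ 2^m := Nat.pow_le_pow_right (by norm_num) hm
  have h2F : (2:F) = 0 := by
    have h := FiniteField.cast_card_eq_zero F
    rw [hF] at h
    push_cast at h
    exact pow_eq_zero_iff (by omega) |>.mp h
  have h8 : 8 ≤ Fintype.card F := by rw [hF]; exact h2m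
  have hne : ∃ x : F, x ≠ 0 ∧ x ≠ 1 := by
    by_contra hcon
    push_neg at hcon
    have hsub : (Finset.univ : Finset F) ⊆ {0, 1} := by
      intro x _
      rcases eq_or_ne x 0 with h | h
      · simp [h]
      · simp [hcon x h]
    have hc := Finset.card_le_card hsub
    rw [Finset.card_univ] at hc
    have h01 : ({0, 1} : Finset F).card ≤ 2 :=
      le_trans (Finset.card_insert_le _ _) (by simp)
    omega
  have ha0 : a ≠ 0 := by
    obtain ⟨x, hx0, hx1⟩ := hne
    intro h
    obtain ⟨j, hj⟩ := ha x hx0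
    cases j with
    | zero => rw [pow_zero] at hj; exact hx1 hj.symm
    | succ n => rw [h, zero_pow (Nat.succ_ne_zero n)] at hj; exact hx0 hj.symm
  have ha1 : a ≠ 1 := by
    obtain ⟨x, hx0, hx1⟩ := hne
    intro h
    obtain ⟨j, hj⟩ := ha x hx0
    rw [h, one_pow] at hj; exact hx1 hj.symm
  have ha3 : a ^ 3 ≠ 1 := by
    intro h
    have hsub : (Finset.univ : Finset F) ⊆ {0, 1, a, a^2} := by
      intro x _
      rcases eq_or_ne x 0 with hx | hx
      · simp [hx]
      · obtain ⟨j, hj⟩ := ha x hx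
        have hj3 : a ^ (j % 3) = x := by
          conv_rhs => rw [← hj, show j = 3 * (j / 3) + j % 3 by omega]
          rw [pow_add, pow_mul, h, one_pow, one_mul]
        have hcase : j % 3 = 0 ∨ j % 3 = 1 ∨ j % 3 = 2 := by omega
        rcases hcase with h' | h' | h' <;> rw [h'] at hj3 <;> simp [← hj3]
    have hc := Finset.card_le_card hsub
    rw [Finset.card_univ] at hc
    have h4 : ({0, 1, a, a^2} : Finset F).card ≤ 4 := by
      calc ({0, 1, a, a^2} : Finset F).card
          ≤ ({1, a, a^2} : Finset F).card + 1 := Finset.card_insert_le _ _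
        _ ≤ (({a, a^2} : Finset F).card + 1) + 1 :=
            Nat.add_le_add_right (Finset.card_insert_le _ _) 1
        _ ≤ ((({a^2} : Finset F).card + 1) + 1) + 1 :=
            Nat.add_le_add_right (Nat.add_le_add_right (Finset.card_insert_le _ _) 1) 1
        _ ≤ 4 := by simp
    omega
  set d : ℕ := 2^m - 2 with hd
  have hd0 : d ≠ 0 := by omega
  have hpowd : ∀ y : F, y ≠ 0 → y ^ d * y = 1 := by
    intro y hy
    rw [← pow_succ, show d + 1 = Fintype.card F - 1 by rw [hd, hF]; omega]
    exact FiniteField.pow_card_sub_one_eq_one y hy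
  have had : a ^ d * a = 1 := hpowd a ha0
  have hk1 : (1:F) + a ^ d ≠ 0 := fun h => ha1 (by linear_combination a * h - had - h2F)
  have hk2 : a + a ^ d ≠ 0 := by
    intro h
    have hsq : (a - 1)^2 = 0 := by linear_combination a * h - had - a * h2F
    exact ha1 (sub_eq_zero.mp (pow_eq_zero_iff (two_ne_zero) |>.mp hsq))
  have hk3 : a ^ d ≠ 0 := pow_ne_zero d ha0
  have hk4 : (1:F) + a + a ^ d ≠ 0 := by
    intro h
    exact ha3 (by linear_combination (a - 1) * a * h - (a - 1) * had)
  -- scalar factor lemmas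
  have hfacA : ∀ e : F, e = 0 ∨ e = 1 →
      zeta8 ^ (iotaN e) = (1+zeta8)/2 + (1-zeta8)/2 * (-1:ℂ) ^ (iotaN e) := by
    rintro e (rfl | rfl) <;> simp [iotaN] <;> ring
  have hfacC : ∀ e : F, e = 0 ∨ e = 1 →
      (zeta8^2) ^ (iotaN e) = (1+zeta8^2)/2 + (1-zeta8^2)/2 * (-1:ℂ) ^ (iotaN e) := by
    rintro e (rfl | rfl) <;> simp [iotaN] <;> ring
  have hval : ∀ e1 e2 e3 : F, (e1 = 0 ∨ e1 = 1) → (e2 = 0 ∨ e2 = 1) → (e3 = 0 ∨ e3 = 1) →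
      (iota8 e1 + 2 * iota8 e2 + 4 * iota8 e3 : ZMod 8).val
        = iotaN e1 + 2 * iotaN e2 + 4 * iotaN e3 := by
    rintro e1 e2 e3 (rfl|rfl) (rfl|rfl) (rfl|rfl) <;> simp [iota8, iotaN] <;> decide
  -- pointwise expansion
  have point : ∀ y x : F,
      zeta8 ^ (f x y).val * (-1:ℂ) ^ (iotaN (Tr m (u*x)) + iotaN (Tr m (v*y)))
      = ((1+zeta8)/2 * ((1+zeta8^2)/2) * chi m (((1 + a^d) * y^d + u) * x)
        + (1+zeta8)/2 * ((1-zeta8^2)/2) * chi m (((a + a^d) * y^d + u) * x)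
        + (1-zeta8)/2 * ((1+zeta8^2)/2) * chi m ((a^d * y^d + u) * x)
        + (1-zeta8)/2 * ((1-zeta8^2)/2) * chi m (((1 + a + a^d) * y^d + u) * x))
        * chi m (v * y) := by
    intro y x
    have E1 : chi m (((1 + a^d) * y^d + u) * x)
        = chi m (x * (1 + a^d) * y^d) * chi m (u*x) := by
      rw [← chi_add h2F m hF]; congr 1; ring
    have E2 : chi m (((a + a^d) * y^d + u) * x)
        = chi m (x * (1+a) * y^d) * (chi m (x * (1 + a^d) * y^d) * chi m (u*x)) := by
      rw [← chi_add h2F m hF, ← chi_add h2F m hF]; congr 1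
      linear_combination (-(x * y^d)) * h2F
    have E3 : chi m ((a^d * y^d + u) * x)
        = chi m (x * y^d) * (chi m (x * (1 + a^d) * y^d) * chi m (u*x)) := by
      rw [← chi_add h2F m hF, ← chi_add h2F m hF]; congr 1
      linear_combination (-(x * y^d)) * h2F
    have E4 : chi m (((1 + a + a^d) * y^d + u) * x)
        = chi m (x * y^d) * (chi m (x * (1+a) * y^d) *
            (chi m (x * (1 + a^d) * y^d) * chi m (u*x))) := by
      rw [← chi_add h2F m hF, ← chi_add h2F m hF, ← chi_add h2F m hF]; congr 1
      linear_combination (-(x * y^d)) * h2F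
    rw [hf x y]
    try simp only [← hd]
    rw [hval _ _ _ (tr_01 h2F m hF _) (tr_01 h2F m hF _) (tr_01 h2F m hF _)]
    rw [pow_add, pow_add, pow_add, pow_mul, pow_mul, zeta8_pow_four]
    rw [hfacA _ (tr_01 h2F m hF _), hfacC _ (tr_01 h2F m hF _)]
    simp only [← chi_def]
    rw [E1, E2, E3, E4]
    ring
  have inner : ∀ y : F,
      (∑ x : F, zeta8 ^ (f x y).val *
        (-1:ℂ) ^ (iotaN (Tr m (u*x)) + iotaN (Tr m (v*y))))
      = ((1+zeta8)/2 * ((1+zeta8^2)/2) * (if (1 + a^d) * y^d + u = 0 then (2:ℂ)^m else 0)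
        + (1+zeta8)/2 * ((1-zeta8^2)/2) * (if (a + a^d) * y^d + u = 0 then (2:ℂ)^m else 0)
        + (1-zeta8)/2 * ((1+zeta8^2)/2) * (if a^d * y^d + u = 0 then (2:ℂ)^m else 0)
        + (1-zeta8)/2 * ((1-zeta8^2)/2) * (if (1 + a + a^d) * y^d + u = 0 then (2:ℂ)^m else 0))
        * chi m (v * y) := by
    intro y
    rw [Finset.sum_congr rfl (fun x _ => point y x)]
    rw [← Finset.sum_mul]
    congr 1
    rw [Finset.sum_add_distrib, Finset.sum_add_distrib, Finset.sum_add_distrib]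
    rw [← Finset.mul_sum, ← Finset.mul_sum, ← Finset.mul_sum, ← Finset.mul_sum]
    rw [sum_chi h2F m hm1 hF, sum_chi h2F m hm1 hF, sum_chi h2F m hm1 hF,
      sum_chi h2F m hm1 hF]
  rw [Finset.sum_comm]
  rw [Finset.sum_congr rfl (fun y _ => inner y)]
  rcases eq_or_ne u 0 with hu | hu
  · subst hu
    rw [Finset.sum_eq_single_of_mem (0:F) (Finset.mem_univ 0) ?_]
    · rw [zero_pow hd0]
      norm_num [chi_zero]
      rw [show (1+zeta8)/2 * ((1+zeta8^2)/2) * (2:ℂ)^m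
            + (1+zeta8)/2 * ((1-zeta8^2)/2) * (2:ℂ)^m
            + (1-zeta8)/2 * ((1+zeta8^2)/2) * (2:ℂ)^m
            + (1-zeta8)/2 * ((1-zeta8^2)/2) * (2:ℂ)^m = (2:ℂ)^m by ring]
      rw [norm_pow, Complex.norm_two]
    · intro y _ hy0
      have hyd : y^d ≠ 0 := pow_ne_zero d hy0
      rw [if_neg (by simpa using mul_ne_zero hk1 hyd),
        if_neg (by simpa using mul_ne_zero hk2 hyd),
        if_neg (by simpa using mul_ne_zero hk3 hyd),
        if_neg (by simpa using mul_ne_zero hk4 hyd)]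
      ring
  · have huu : u * u⁻¹ = 1 := mul_inv_cancel₀ hu
    have hkey : ∀ k : F, k ≠ 0 →
        (∑ y : F, (if k * y^d + u = 0 then (2:ℂ)^m else 0) * chi m (v*y))
          = (2:ℂ)^m * chi m (v * (k * u⁻¹)) := by
      intro k hk
      have hy₀ : (k * u⁻¹) ≠ 0 := mul_ne_zero hk (inv_ne_zero hu)
      rw [Finset.sum_eq_single_of_mem (k * u⁻¹) (Finset.mem_univ _) ?_]
      · have h1 : (k*u⁻¹)^d * (k*u⁻¹) = 1 := hpowd _ hy₀
        have hcond : k * (k*u⁻¹)^d + u = 0 := by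
          linear_combination u * h1 - (k * (k*u⁻¹)^d) * huu + u * h2F
        rw [if_pos hcond]
      · intro y _ hyne
        have hcond : k * y^d + u ≠ 0 := by
          intro hcontra
          rcases eq_or_ne y 0 with rfl | hy0
          · rw [zero_pow hd0, mul_zero, zero_add] at hcontra; exact hu hcontra
          · have hyd : y^d * y = 1 := hpowd y hy0
            apply hyne
            have hky : k + u * y = 0 := by linear_combination y * hcontra - k * hyd
            linear_combination (-u⁻¹) * hky + y * huu + y * h2F
        rw [if_neg hcond, zero_mul]
    have expand : ∀ y : F,
        ((1+zeta8)/2 * ((1+zeta8^2)/2) * (if (1 + a^d) * y^d + u = 0 then (2:ℂ)^m else 0)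
        + (1+zeta8)/2 * ((1-zeta8^2)/2) * (if (a + a^d) * y^d + u = 0 then (2:ℂ)^m else 0)
        + (1-zeta8)/2 * ((1+zeta8^2)/2) * (if a^d * y^d + u = 0 then (2:ℂ)^m else 0)
        + (1-zeta8)/2 * ((1-zeta8^2)/2) * (if (1 + a + a^d) * y^d + u = 0 then (2:ℂ)^m else 0))
        * chi m (v * y)
        = (1+zeta8)/2 * ((1+zeta8^2)/2) *
            ((if (1 + a^d) * y^d + u = 0 then (2:ℂ)^m else 0) * chi m (v*y))
        + (1+zeta8)/2 * ((1-zeta8^2)/2) *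
            ((if (a + a^d) * y^d + u = 0 then (2:ℂ)^m else 0) * chi m (v*y))
        + (1-zeta8)/2 * ((1+zeta8^2)/2) *
            ((if a^d * y^d + u = 0 then (2:ℂ)^m else 0) * chi m (v*y))
        + (1-zeta8)/2 * ((1-zeta8^2)/2) *
            ((if (1 + a + a^d) * y^d + u = 0 then (2:ℂ)^m else 0) * chi m (v*y)) :=
      fun y => by ring
    rw [Finset.sum_congr rfl (fun y _ => expand y)]
    rw [Finset.sum_add_distrib, Finset.sum_add_distrib, Finset.sum_add_distrib]
    rw [← Finset.mul_sum, ← Finset.mul_sum, ← Finset.mul_sum, ← Finset.mul_sum]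
    rw [hkey _ hk1, hkey _ hk2, hkey _ hk3, hkey _ hk4]
    have hr2 : chi m (v * ((a + a^d) * u⁻¹))
        = chi m (v * ((1+a) * u⁻¹)) * chi m (v * ((1 + a^d) * u⁻¹)) := by
      rw [← chi_add h2F m hF]; congr 1
      linear_combination (-(v * u⁻¹)) * h2F
    have hr3 : chi m (v * (a^d * u⁻¹))
        = chi m (v * u⁻¹) * chi m (v * ((1 + a^d) * u⁻¹)) := by
      rw [← chi_add h2F m hF]; congr 1
      linear_combination (-(v * u⁻¹)) * h2F
    have hr4 : chi m (v * ((1 + a + a^d) * u⁻¹))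
        = chi m (v * u⁻¹) * (chi m (v * ((1+a) * u⁻¹)) * chi m (v * ((1 + a^d) * u⁻¹))) := by
      rw [← chi_add h2F m hF, ← chi_add h2F m hF]; congr 1
      linear_combination (-(v * u⁻¹)) * h2F
    rw [hr2, hr3, hr4]
    rw [show (1+zeta8)/2 * ((1+zeta8^2)/2) * ((2:ℂ)^m * chi m (v * ((1 + a^d) * u⁻¹)))
        + (1+zeta8)/2 * ((1-zeta8^2)/2) * ((2:ℂ)^m *
            (chi m (v * ((1+a) * u⁻¹)) * chi m (v * ((1 + a^d) * u⁻¹))))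
        + (1-zeta8)/2 * ((1+zeta8^2)/2) * ((2:ℂ)^m *
            (chi m (v * u⁻¹) * chi m (v * ((1 + a^d) * u⁻¹))))
        + (1-zeta8)/2 * ((1-zeta8^2)/2) * ((2:ℂ)^m *
            (chi m (v * u⁻¹) * (chi m (v * ((1+a) * u⁻¹)) * chi m (v * ((1 + a^d) * u⁻¹)))))
        = (2:ℂ)^m * chi m (v * ((1 + a^d) * u⁻¹)) *
            (((1+zeta8)/2 + (1-zeta8)/2 * chi m (v * u⁻¹)) *
             ((1+zeta8^2)/2 + (1-zeta8^2)/2 * chi m (v * ((1+a) * u⁻¹)))) by ring]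
    rcases chi_vals m (v * u⁻¹) with hq | hq <;>
      rcases chi_vals (F := F) m (v * ((1+a) * u⁻¹)) with hr | hr <;>
      rw [hq, hr]
    · rw [show (1+zeta8)/2 + (1-zeta8)/2 * (1:ℂ) = 1 by ring,
        show (1+zeta8^2)/2 + (1-zeta8^2)/2 * (1:ℂ) = 1 by ring]
      simp [map_pow, abs_chi]
    · rw [show (1+zeta8)/2 + (1-zeta8)/2 * (1:ℂ) = 1 by ring,
        show (1+zeta8^2)/2 + (1-zeta8^2)/2 * (-1:ℂ) = zeta8^2 by ring]
      simp [map_pow, abs_chi, abs_zeta8]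
    · rw [show (1+zeta8)/2 + (1-zeta8)/2 * (-1:ℂ) = zeta8 by ring,
        show (1+zeta8^2)/2 + (1-zeta8^2)/2 * (1:ℂ) = 1 by ring]
      simp [map_pow, abs_chi, abs_zeta8]
    · rw [show (1+zeta8)/2 + (1-zeta8)/2 * (-1:ℂ) = zeta8 by ring,
        show (1+zeta8^2)/2 + (1-zeta8^2)/2 * (-1:ℂ) = zeta8^2 by ring]
      simp [map_pow, abs_chi, abs_zeta8]
end
end

section
/- Let m ≥ 3 and let d be a positive integer with d² ≡ 1 (mod 2^m−1). Let α₁, α₂, α₃ ∈ 𝔽_{2^m}^* be pairwise distinct with α_i^{d+1} = 1, and let α₄ = α₁+α₂+α₃ with α₄^{d+1} = 1. For i = 1,2,3,4, set π_i(y) = α_i y^d, h_i(y) = Tr(α_i y^d) and f_i(x,y) = Tr(x π_i(y)) + h_i(y) (values in {0,1} ⊆ 𝔽_{2^m}). Then: (i) f₁(x,y)+f₂(x,y)+f₃(x,y)+f₄(x,y) = 0 for all x, y ∈ 𝔽_{2^m}; and (ii) h₁(π₁(y))+h₂(π₂(y))+h₃(π₃(y))+h₄(π₄(y)) = 0 for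 all y ∈ 𝔽_{2^m} (here each π_i is its own inverse, so this is the condition Σᵢ h_i(π_i^{−1}(y)) = 0). -/
noncomputable section

/-- Let m ≥ 3, d² ≡ 1 (mod 2^m−1), α₁,α₂,α₃ ∈ 𝔽_{2^m}^* pairwise distinct with
α_i^{d+1} = 1, and α₄ = α₁+α₂+α₃ with α₄^{d+1} = 1. For π_i(y) = α_i y^d,
h_i(y) = Tr(α_i y^d), f_i(x,y) = Tr(x π_i(y)) + h_i(y), we have
(i) f₁+f₂+f₃+f₄ = 0, and (ii) h₁(π₁(y))+h₂(π₂(y))+h₃(π₃(y))+h₄(π₄(y)) = 0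
(each π_i being its own inverse, this is Σᵢ h_i(π_i^{−1}(y)) = 0). -/
theorem stmt15 {F : Type} [Field F] [Fintype F] (m d : ℕ)
    (hm : 3 ≤ m) (hF : Fintype.card F = 2 ^ m)
    (hd : 1 ≤ d) (hdd : d ^ 2 ≡ 1 [MOD 2 ^ m - 1])
    (α₁ α₂ α₃ α₄ : F)
    (h10 : α₁ ≠ 0) (h20 : α₂ ≠ 0) (h30 : α₃ ≠ 0)
    (h12 : α₁ ≠ α₂) (h13 : α₁ ≠ α₃) (h23 : α₂ ≠ α₃)
    (h1 : α₁ ^ (d + 1) = 1) (h2 : α₂ ^ (d + 1) = 1) (h3 : α₃ ^ (d + 1) = 1)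
    (h4def : α₄ = α₁ + α₂ + α₃) (h4 : α₄ ^ (d + 1) = 1)
    (π₁ π₂ π₃ π₄ : F → F) (h₁ h₂ h₃ h₄ : F → F) (f₁ f₂ f₃ f₄ : F → F → F)
    (hp1 : ∀ y, π₁ y = α₁ * y ^ d) (hp2 : ∀ y, π₂ y = α₂ * y ^ d)
    (hp3 : ∀ y, π₃ y = α₃ * y ^ d) (hp4 : ∀ y, π₄ y = α₄ * y ^ d)
    (hh1 : ∀ y, h₁ y = Tr m (α₁ * y ^ d)) (hh2 : ∀ y, h₂ y = Tr m (α₂ * y ^ d))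
    (hh3 : ∀ y, h₃ y = Tr m (α₃ * y ^ d)) (hh4 : ∀ y, h₄ y = Tr m (α₄ * y ^ d))
    (hf1 : ∀ x y, f₁ x y = Tr m (x * π₁ y) + h₁ y)
    (hf2 : ∀ x y, f₂ x y = Tr m (x * π₂ y) + h₂ y)
    (hf3 : ∀ x y, f₃ x y = Tr m (x * π₃ y) + h₃ y)
    (hf4 : ∀ x y, f₄ x y = Tr m (x * π₄ y) + h₄ y) :
    (∀ x y : F, f₁ x y + f₂ x y + f₃ x y + f₄ x y = 0) ∧
    (∀ y : F, h₁ (π₁ y) + h₂ (π₂ y) + h₃ (π₃ y) + h₄ (π₄ y) = 0) := by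
  -- characteristic 2
  haveI hp2' : Fact (Nat.Prime 2) := ⟨Nat.prime_two⟩
  have hdvd : (2 : ℕ) ∣ ringChar F := by
    rw [prime_dvd_char_iff_dvd_card, hF]
    exact dvd_pow_self 2 (by omega)
  have hprime : (ringChar F).Prime := CharP.char_is_prime F _
  have hchar : ringChar F = 2 :=
    ((Nat.prime_dvd_prime_iff_eq Nat.prime_two hprime).mp hdvd).symm
  haveI : CharP F 2 := hchar ▸ ringChar.charP F
  have hself : ∀ a : F, a + a = 0 := fun a => CharTwo.add_self_eq_zero a
  have trAdd : ∀ a b : F, Tr m (a + b) = Tr m a + Tr m b := by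
    intro a b
    unfold Tr
    rw [← Finset.sum_add_distrib]
    refine Finset.sum_congr rfl fun i _ => ?_
    exact add_pow_char_pow a b 2 i
  constructor
  · intro x y
    rw [hf1, hf2, hf3, hf4, hh1, hh2, hh3, hh4, hp1, hp2, hp3, hp4]
    have key : ∀ u : F,
        Tr m (α₁ * u) + Tr m (α₂ * u) + Tr m (α₃ * u) + Tr m (α₄ * u) = 0 := by
      intro u
      rw [← trAdd, ← trAdd, ← trAdd]
      have : α₁ * u + α₂ * u + α₃ * u + α₄ * u = 0 := by
        rw [h4def]; ring_nf
        rw [CharTwo.two_eq_zero]; ring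
      rw [this]
      simp [Tr, zero_pow, pow_pos, Nat.pow_pos]
    have e1 : x * (α₁ * y ^ d) = α₁ * (x * y ^ d) := by ring
    have e2 : x * (α₂ * y ^ d) = α₂ * (x * y ^ d) := by ring
    have e3 : x * (α₃ * y ^ d) = α₃ * (x * y ^ d) := by ring
    have e4 : x * (α₄ * y ^ d) = α₄ * (x * y ^ d) := by ring
    rw [e1, e2, e3, e4]
    have := key (x * y ^ d)
    have := key (y ^ d)
    -- rearrange sums
    calc Tr m (α₁ * (x * y ^ d)) + Tr m (α₁ * y ^ d) +
          (Tr m (α₂ * (x * y ^ d)) + Tr m (α₂ * y ^ d)) +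
          (Tr m (α₃ * (x * y ^ d)) + Tr m (α₃ * y ^ d)) +
          (Tr m (α₄ * (x * y ^ d)) + Tr m (α₄ * y ^ d))
        = (Tr m (α₁ * (x * y ^ d)) + Tr m (α₂ * (x * y ^ d)) +
            Tr m (α₃ * (x * y ^ d)) + Tr m (α₄ * (x * y ^ d))) +
          (Tr m (α₁ * y ^ d) + Tr m (α₂ * y ^ d) +
            Tr m (α₃ * y ^ d) + Tr m (α₄ * y ^ d)) := by ring
      _ = 0 := by rw [key (x * y ^ d), key (y ^ d), add_zero]
  · intro y
    rw [hp1, hp2, hp3, hp4, hh1, hh2, hh3, hh4]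
    have gen : ∀ a : F, a ^ (d + 1) = 1 →
        a * (a * y ^ d) ^ d = y ^ (d * d) := by
      intro a ha
      rw [mul_pow, ← pow_mul, ← mul_assoc, ← pow_succ']
      rw [ha, one_mul]
    rw [gen α₁ h1, gen α₂ h2, gen α₃ h3, gen α₄ h4]
    rw [hself, zero_add, hself]
end
end
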